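/- arXiv:math/0005309 — 2 statements merged into one kernel-verified Lean document; each statement's English description precedes it below -/
import Mathlib

section
/- Let A₀ be a Noetherian integral domain with a prime element π and let σ be an injective ring endomorphism of A₀ with σ(π) = π. Let (M, φ) be a finite free σ-module over A₀, and set N₀ = ⋃_{k≥1} Ker(φ^k). Then N₀ is a φ-stable submodule on which φ is locally nilpotent, both N₀ and M/N₀ are torsion-free finitely generated A₀-modules, and the induced map φ on M/N₀ is injective after localizing at (π). -/
private lemma iter_smul {A₀ : Type*} [CommRing A₀] (σ : A₀ →+* A₀)
    {M : Type*} [AddCommGroup M] [Module A₀ M] (φ : M →ₛₗ[σ] M)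
    (a : A₀) (x : M) : ∀ k : ℕ, (⇑φ)^[k] (a • x) = (σ^[k] a) • (⇑φ)^[k] x := by
  intro k
  induction k generalizing x a with
  | zero => simp
  | succ n ih =>
    rw [Function.iterate_succ_apply, Function.iterate_succ_apply,
      Function.iterate_succ_apply', map_smulₛₗ, ih]
    congr 1
    rw [← Function.iterate_succ_apply, Function.iterate_succ_apply']

/-- Splitting off the nilpotent part of a σ-module (Lemma 4.5): with
`N₀ = ⋃ₖ Ker φᵏ`, the submodule `N₀` is φ-stable, φ is locally nilpotent on `N₀`,
`N₀` and `M/N₀` are torsion-free and finitely generated, and the induced map of φ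
on `M/N₀` is injective (hence injective after localizing at `(π)`). -/
theorem stmt_6 {A₀ : Type*} [CommRing A₀] [IsDomain A₀] [IsNoetherianRing A₀]
    (π : A₀) (hπ : Prime π)
    (σ : A₀ →+* A₀) (hσinj : Function.Injective σ) (hσπ : σ π = π)
    {M : Type*} [AddCommGroup M] [Module A₀ M] [Module.Free A₀ M] [Module.Finite A₀ M]
    (φ : M →ₛₗ[σ] M)
    (N₀ : Submodule A₀ M)
    (hN₀ : ∀ x : M, x ∈ N₀ ↔ ∃ k ≥ 1, (⇑φ)^[k] x = 0) :
    (∀ x ∈ N₀, φ x ∈ N₀) ∧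
    (∀ x ∈ N₀, ∃ k, (⇑φ)^[k] x = 0) ∧
    N₀.FG ∧ Module.Finite A₀ (M ⧸ N₀) ∧
    (∀ (a : A₀), a ≠ 0 → ∀ x ∈ N₀, a • x = 0 → x = 0) ∧
    (∀ (a : A₀) (x : M), a ≠ 0 → a • x ∈ N₀ → x ∈ N₀) ∧
    (∀ x : M, φ x ∈ N₀ → x ∈ N₀) := by
  have htf : ∀ (a : A₀) (x : M), a ≠ 0 → a • x = 0 → x = 0 := by
    intro a x ha h
    rcases smul_eq_zero.mp h with h | h
    · exact absurd h ha
    · exact h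
  refine ⟨?_, ?_, ?_, ?_, ?_, ?_, ?_⟩
  · intro x hx
    rcases (hN₀ x).mp hx with ⟨k, hk, h0⟩
    refine (hN₀ (φ x)).mpr ⟨k, hk, ?_⟩
    have : (⇑φ)^[k] (φ x) = φ ((⇑φ)^[k] x) := by
      rw [← Function.iterate_succ_apply, Function.iterate_succ_apply']
    rw [this, h0, map_zero]
  · intro x hx
    rcases (hN₀ x).mp hx with ⟨k, _, h0⟩
    exact ⟨k, h0⟩
  · exact IsNoetherian.noetherian N₀
  · infer_instance
  · intro a ha x _ h
    exact htf a x ha h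
  · intro a x ha hx
    rcases (hN₀ _).mp hx with ⟨k, hk, h0⟩
    rw [iter_smul σ φ a x k] at h0
    have hσa : ∀ n : ℕ, σ^[n] a ≠ 0 := by
      intro n
      induction n with
      | zero => simpa using ha
      | succ m ihm =>
        rw [Function.iterate_succ_apply']
        intro h
        exact ihm (hσinj (by simpa using h))
    exact (hN₀ x).mpr ⟨k, hk, htf _ _ (hσa k) h0⟩
  · intro x hx
    rcases (hN₀ _).mp hx with ⟨k, hk, h0⟩
    refine (hN₀ x).mpr ⟨k + 1, by omega, ?_⟩
    rw [Function.iterate_succ_apply]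
    exact h0
end

section
/- Let A be a commutative ring with an endomorphism σ. Let K(A,σ) be the Grothendieck group of the category of finite A-modules with a σ-linear endomorphism, modulo short exact sequences and the relation [M, φ₁+φ₂] = [M, φ₁] + [M, φ₂], with A-module structure a·[M,φ] = [M, L_a∘φ]. Then for every a ∈ A and every object (M,φ), one has a·[M,φ] = σ(a)·[M,φ] in K(A,σ); consequently the ideal J of A generated by {a − σ(a) : a ∈ A} annihilates K(A,σ). -/
/-- The key observation of section 10 about the Grothendieck group `K(A,σ)`: for any additive
invariant `κ` of finite `A`-modules with a σ-linear endomorphism — additive on short exact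
sequences and satisfying `κ(M, φ₁+φ₂) = κ(M,φ₁) + κ(M,φ₂)` — one has
`κ(M, a•φ) = κ(M, σ(a)•φ)`, i.e. `a·[M,φ] = σ(a)·[M,φ]` in `K(A,σ)`; consequently the ideal
generated by `{a − σ(a)}` annihilates `K(A,σ)`. -/
theorem stmt_17 (A : Type) [CommRing A] (σ : A →+* A)
    (K : Type) [AddCommGroup K]
    (κ : ∀ (M : Type) [AddCommGroup M] [Module A M] [Module.Finite A M], (M →ₛₗ[σ] M) → K)
    (hexact : ∀ (M₁ M M₂ : Type) [AddCommGroup M₁] [Module A M₁] [Module.Finite A M₁]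
      [AddCommGroup M] [Module A M] [Module.Finite A M]
      [AddCommGroup M₂] [Module A M₂] [Module.Finite A M₂]
      (φ₁ : M₁ →ₛₗ[σ] M₁) (φ : M →ₛₗ[σ] M) (φ₂ : M₂ →ₛₗ[σ] M₂)
      (f : M₁ →ₗ[A] M) (g : M →ₗ[A] M₂),
      Function.Injective f → Function.Surjective g →
      LinearMap.range f = LinearMap.ker g →
      (∀ x, f (φ₁ x) = φ (f x)) → (∀ x, g (φ x) = φ₂ (g x)) →
      κ M φ = κ M₁ φ₁ + κ M₂ φ₂)
    (hadd : ∀ (M : Type) [AddCommGroup M] [Module A M] [Module.Finite A M]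
      (φ₁ φ₂ : M →ₛₗ[σ] M), κ M (φ₁ + φ₂) = κ M φ₁ + κ M φ₂)
    (M : Type) [AddCommGroup M] [Module A M] [Module.Finite A M]
    (φ : M →ₛₗ[σ] M) (a : A) :
    κ M (a • φ) = κ M (σ a • φ) := by
  -- κ of the zero endomorphism is 0
  have h0 : ∀ (N : Type) [AddCommGroup N] [Module A N] [Module.Finite A N],
      κ N (0 : N →ₛₗ[σ] N) = 0 := by
    intro N _ _ _
    have h := hadd N 0 0
    rw [add_zero] at h
    exact right_eq_add.mp h
  haveI : Module.Finite A (M × M) := Module.Finite.prod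
  -- the two summands of Φ
  let Φ₁ : M × M →ₛₗ[σ] M × M :=
    { toFun := fun p => (φ p.2, 0)
      map_add' := by intro p q; simp [Prod.ext_iff]
      map_smul' := by intro c p; simp [Prod.ext_iff] }
  let Φ₂ : M × M →ₛₗ[σ] M × M :=
    { toFun := fun p => (0, a • φ p.2)
      map_add' := by intro p q; simp [Prod.ext_iff, smul_add]
      map_smul' := by intro c p; simp [Prod.ext_iff, smul_comm (σ c) a] }
  -- the linear maps of the exact sequence  0 → M → M×M → M → 0, x ↦ (x, a•x)
  let f : M →ₗ[A] M × M :=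
    { toFun := fun x => (x, a • x)
      map_add' := by intro x y; simp [Prod.ext_iff, smul_add]
      map_smul' := by intro c x; simp [Prod.ext_iff, smul_comm c a] }
  let g : M × M →ₗ[A] M :=
    { toFun := fun p => p.2 - a • p.1
      map_add' := by intro p q; simp [smul_add]; abel
      map_smul' := by intro c p; simp [smul_sub, smul_comm c a] }
  have hfinj : Function.Injective f := by
    intro x y h
    exact congrArg Prod.fst h
  have hgsurj : Function.Surjective g := by
    intro y
    exact ⟨(0, y), by simp [g]⟩
  have hrange : LinearMap.range f = LinearMap.ker g := by
    ext p
    simp only [LinearMap.mem_range, LinearMap.mem_ker]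
    constructor
    · rintro ⟨x, rfl⟩
      simp [f, g]
    · intro h
      refine ⟨p.1, ?_⟩
      have : p.2 = a • p.1 := by
        have := sub_eq_zero.mp h
        simpa using this
      simp [f, Prod.ext_iff, this.symm]
  -- first computation: κ (M×M) (Φ₁+Φ₂) = κ M (σ a • φ) + κ M 0
  have e1 : κ (M × M) (Φ₁ + Φ₂) = κ M (σ a • φ) + κ M 0 := by
    refine hexact M (M × M) M (σ a • φ) (Φ₁ + Φ₂) 0 f g hfinj hgsurj hrange ?_ ?_
    · intro x
      simp [f, Φ₁, Φ₂, Prod.ext_iff, map_smulₛₗ, smul_comm a (σ a)]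
    · intro p
      simp [g, Φ₁, Φ₂]
  -- second computation, via the split sequence with inl / snd
  have hsplit : LinearMap.range (LinearMap.inl A M M) = LinearMap.ker (LinearMap.snd A M M) :=
    LinearMap.range_inl A M M
  have eΦ₁ : κ (M × M) Φ₁ = κ M 0 + κ M 0 := by
    refine hexact M (M × M) M 0 Φ₁ 0 (LinearMap.inl A M M) (LinearMap.snd A M M)
      LinearMap.inl_injective (fun y => ⟨(0, y), rfl⟩) hsplit ?_ ?_
    · intro x; simp [Φ₁, Prod.ext_iff]
    · intro p; simp [Φ₁]
  have eΦ₂ : κ (M × M) Φ₂ = κ M 0 + κ M (a • φ) := by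
    refine hexact M (M × M) M 0 Φ₂ (a • φ) (LinearMap.inl A M M) (LinearMap.snd A M M)
      LinearMap.inl_injective (fun y => ⟨(0, y), rfl⟩) hsplit ?_ ?_
    · intro x; simp [Φ₂, Prod.ext_iff]
    · intro p; simp [Φ₂]
  have e2 : κ (M × M) (Φ₁ + Φ₂) = κ M (a • φ) := by
    rw [hadd (M × M) Φ₁ Φ₂, eΦ₁, eΦ₂, h0 M]
    abel
  rw [← e2, e1, h0 M, add_zero]
end
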